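/- Let $G$ be a finite perfect group (i.e. $G$ equals its own commutator subgroup) such that every symmetric 2-cocycle on $G$ with values in $\mathbb{C}^\times$ is a coboundary. Let $\pi : A(G) \to G$ be the unique group homomorphism with $\pi \circ \varphi_G = \mathrm{id}_G$ and $Ab : A(G) \to A(G)^{ab}$ the abelianization map. Then $\pi \times Ab : A(G) \to G \times A(G)^{ab}$, $a \mapsto (\pi(a), Ab(a))$, is a group isomorphism. -/

import Mathlib

open Quandles

private def ee {G : Type*} [Group G] (g : G) : Rack.EnvelGroup (Quandle.Conj G) :=
  Rack.toEnvelGroup (Quandle.Conj G) g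

private lemma ee_conj {G : Type*} [Group G] (g h : G) :
    ee (g * h * g⁻¹) = ee g * ee h * (ee g)⁻¹ := by
  have := (Rack.toEnvelGroup (Quandle.Conj G)).map_act (x := g) (y := h)
  rwa [Quandle.conj_act_eq_conj, Quandle.conj_act_eq_conj] at this

private lemma ee_gen {G : Type*} [Group G] :
    Subgroup.closure (Set.range (ee (G := G))) = ⊤ := by
  rw [eq_top_iff]
  rintro x -
  refine Quotient.ind (fun a => ?_) x
  induction a with
  | unit => exact one_mem _
  | incl y => exact Subgroup.subset_closure ⟨y, rfl⟩
  | mul a b iha ihb => exact mul_mem iha ihb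
  | inv a iha => exact inv_mem iha

section
variable {G : Type*} [Group G] (π : Rack.EnvelGroup (Quandle.Conj G) →* G)
  (hπ : ∀ g : G, π (Rack.toEnvelGroup (Quandle.Conj G) g) = g)

include hπ in
private lemma hπ' (g : G) : π (ee g) = g := hπ g

include hπ in
private lemma ee_conj_gen (a : Rack.EnvelGroup (Quandle.Conj G)) (h : G) :
    a * ee h * a⁻¹ = ee (π a * h * (π a)⁻¹) := by
  have hx : a ∈ Subgroup.closure (Set.range (ee (G := G))) := by rw [ee_gen]; trivial
  revert h
  refine Subgroup.closure_induction (p := fun a _ => ∀ h : G,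
      a * ee h * a⁻¹ = ee (π a * h * (π a)⁻¹)) ?_ ?_ ?_ ?_ hx
  · rintro x ⟨g, rfl⟩ h
    rw [hπ' π hπ, ← ee_conj]
  · intro h; simp
  · intro x y hx hy ihx ihy h
    calc x * y * ee h * (x * y)⁻¹ = x * (y * ee h * y⁻¹) * x⁻¹ := by group
      _ = x * ee (π y * h * (π y)⁻¹) * x⁻¹ := by rw [ihy]
      _ = ee (π x * (π y * h * (π y)⁻¹) * (π x)⁻¹) := ihx _
      _ = ee (π (x * y) * h * (π (x * y))⁻¹) := by
          rw [map_mul]; exact congrArg _ (by group)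
  · intro x hx ihx h
    have H := ihx ((π x)⁻¹ * h * π x)
    have h2 : π x * ((π x)⁻¹ * h * π x) * (π x)⁻¹ = h := by group
    rw [h2] at H
    rw [map_inv, inv_inv]
    rw [← H]; group

include hπ in
private lemma ee_central {n : Rack.EnvelGroup (Quandle.Conj G)} (hn : n ∈ π.ker)
    (b : Rack.EnvelGroup (Quandle.Conj G)) : n * b = b * n := by
  have hb : b ∈ Subgroup.closure (Set.range (ee (G := G))) := by rw [ee_gen]; trivial
  refine Subgroup.closure_induction (p := fun b _ => n * b = b * n) ?_ ?_ ?_ ?_ hb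
  · rintro x ⟨h, rfl⟩
    have hc := ee_conj_gen π hπ n h
    rw [MonoidHom.mem_ker.mp hn, one_mul, inv_one, mul_one] at hc
    exact mul_inv_eq_iff_eq_mul.mp hc
  · simp
  · intro x y _ _ ihx ihy
    rw [← mul_assoc, ihx, mul_assoc, ihy, ← mul_assoc]
  · intro x _ ihx
    exact (Commute.inv_right ihx : _)

private def sα (g h : G) : Rack.EnvelGroup (Quandle.Conj G) :=
  ee g * ee h * (ee (g * h))⁻¹

include hπ in
private lemma sα_mem (g h : G) : sα g h ∈ π.ker := by
  simp only [sα, MonoidHom.mem_ker, map_mul, map_inv, hπ' π hπ]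
  group

include hπ in
private lemma sα_conj (x g h : G) : sα (x * g * x⁻¹) (x * h * x⁻¹) = sα g h := by
  have harg : (x * g * x⁻¹) * (x * h * x⁻¹) = x * (g * h) * x⁻¹ := by group
  have hc := ee_central π hπ (sα_mem π hπ g h) (ee x)
  simp only [sα] at hc ⊢
  rw [harg, ee_conj, ee_conj, ee_conj]
  have h2 : ee x * ee g * (ee x)⁻¹ * (ee x * ee h * (ee x)⁻¹) *
      (ee x * ee (g * h) * (ee x)⁻¹)⁻¹
      = ee x * (ee g * ee h * (ee (g * h))⁻¹) * (ee x)⁻¹ := by group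
  rw [h2, ← hc]
  exact mul_inv_cancel_right _ _

include hπ in
private lemma sα_symm (g h : G) : sα g h = sα h g := by
  have h1 : sα g h = sα (g * h * g⁻¹) g := by
    simp only [sα]
    rw [show (g * h * g⁻¹) * g = g * h from by group, ee_conj]
    group
  have h2 := sα_conj π hπ g h g
  rw [show g * g * g⁻¹ = g from by group] at h2
  rw [h1, h2]

include hπ in
private lemma sα_cocy (g h k : G) :
    sα g h * sα (g * h) k = sα h k * sα g (h * k) := by
  have hZ := ee_central π hπ (sα_mem π hπ h k)
  simp only [sα] at hZ ⊢
  rw [hZ (ee g * ee (h * k) * (ee (g * (h * k)))⁻¹)]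
  rw [show (g * h) * k = g * (h * k) from mul_assoc g h k]
  have key : ee (h * k) * (ee h * ee k * (ee (h * k))⁻¹) = ee h * ee k := by
    rw [← hZ (ee (h * k))]; group
  calc ee g * ee h * (ee (g * h))⁻¹ * (ee (g * h) * ee k * (ee (g * (h * k)))⁻¹)
      = ee g * (ee h * ee k) * (ee (g * (h * k)))⁻¹ := by group
    _ = ee g * (ee (h * k) * (ee h * ee k * (ee (h * k))⁻¹)) * (ee (g * (h * k)))⁻¹ := by
        rw [key]
    _ = ee g * ee (h * k) * ((ee h * ee k * (ee (h * k))⁻¹) * (ee (g * (h * k)))⁻¹) := by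
        group
    _ = ee g * ee (h * k) * ((ee (g * (h * k)))⁻¹ * (ee h * ee k * (ee (h * k))⁻¹)) := by
        rw [hZ]
    _ = ee g * ee (h * k) * (ee (g * (h * k)))⁻¹ * (ee h * ee k * (ee (h * k))⁻¹) := by
        group

include hπ in
private lemma nmem (a : Rack.EnvelGroup (Quandle.Conj G)) : (ee (π a))⁻¹ * a ∈ π.ker := by
  rw [MonoidHom.mem_ker, map_mul, map_inv, hπ' π hπ, inv_mul_cancel]

include hπ in
private lemma mulkey (a b : Rack.EnvelGroup (Quandle.Conj G)) :
    (ee (π a * π b))⁻¹ * (a * b)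
      = sα (π a) (π b) * ((ee (π a))⁻¹ * a) * ((ee (π b))⁻¹ * b) := by
  have hna := ee_central π hπ (nmem π hπ a)
  have hα := ee_central π hπ (sα_mem π hπ (π a) (π b))
  simp only [sα] at hα ⊢
  calc (ee (π a * π b))⁻¹ * (a * b)
      = (ee (π a * π b))⁻¹ * ee (π a) * (((ee (π a))⁻¹ * a) * ee (π b)) * ((ee (π b))⁻¹ * b) := by
        group
    _ = (ee (π a * π b))⁻¹ * ee (π a) * (ee (π b) * ((ee (π a))⁻¹ * a)) * ((ee (π b))⁻¹ * b) := by
        rw [hna]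
    _ = (ee (π a * π b))⁻¹ * (ee (π a) * ee (π b) * (ee (π a * π b))⁻¹)
          * (ee (π a * π b) * (((ee (π a))⁻¹ * a) * ((ee (π b))⁻¹ * b))) := by group
    _ = (ee (π a) * ee (π b) * (ee (π a * π b))⁻¹) * (ee (π a * π b))⁻¹
          * (ee (π a * π b) * (((ee (π a))⁻¹ * a) * ((ee (π b))⁻¹ * b))) := by rw [← hα]
    _ = ee (π a) * ee (π b) * (ee (π a * π b))⁻¹ * ((ee (π a))⁻¹ * a) * ((ee (π b))⁻¹ * b) := by
        group

include hπ in
private lemma ext_char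
    (hsymm : ∀ α : G → G → ℂˣ,
      (∀ g h k : G, α g h * α (g * h) k = α h k * α g (h * k)) →
      (∀ g h : G, α g h = α h g) →
      ∃ f : G → ℂˣ, ∀ g h : G, α g h = f g * f h * (f (g * h))⁻¹)
    (χ : ↥π.ker →* ℂˣ) :
    ∃ Φ : Rack.EnvelGroup (Quandle.Conj G) →* ℂˣ,
      ∀ k (hk : k ∈ π.ker), Φ k = χ ⟨k, hk⟩ := by
  obtain ⟨f, hf⟩ := hsymm (fun g h => χ ⟨sα g h, sα_mem π hπ g h⟩)
    (by
      intro g h k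
      rw [← map_mul, ← map_mul]
      exact congrArg χ (Subtype.ext (sα_cocy π hπ g h k)))
    (fun g h => congrArg χ (Subtype.ext (sα_symm π hπ g h)))
  have mem1 : ee (1 : G) ∈ π.ker := by rw [MonoidHom.mem_ker, hπ' π hπ]
  have hf1 : χ ⟨ee (1:G), mem1⟩ = f 1 := by
    have h11 : (⟨sα 1 1, sα_mem π hπ 1 1⟩ : π.ker) = ⟨ee (1:G), mem1⟩ := by
      apply Subtype.ext
      show sα 1 1 = ee (1:G)
      simp only [sα]
      rw [show (1:G) * 1 = 1 from one_mul 1]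
      group
    have h12 := hf 1 1
    rw [h11, show (1:G) * 1 = 1 from one_mul 1, mul_inv_cancel_right] at h12
    exact h12
  refine ⟨{ toFun := fun a => f (π a) * χ ⟨(ee (π a))⁻¹ * a, nmem π hπ a⟩,
            map_one' := ?_, map_mul' := ?_ }, ?_⟩
  · have h1 : (⟨(ee (π (1 : Rack.EnvelGroup (Quandle.Conj G))))⁻¹ * 1,
        nmem π hπ 1⟩ : π.ker) = (⟨ee (1:G), mem1⟩)⁻¹ := by
      apply Subtype.ext
      show (ee (π (1 : Rack.EnvelGroup (Quandle.Conj G))))⁻¹ * 1 = (ee (1:G))⁻¹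
      rw [map_one, mul_one]
    rw [h1, map_one π, map_inv, hf1, mul_inv_cancel]
  · intro a b
    have hk : (⟨(ee (π (a * b)))⁻¹ * (a * b), nmem π hπ (a * b)⟩ : π.ker)
        = ⟨sα (π a) (π b), sα_mem π hπ _ _⟩ * ⟨(ee (π a))⁻¹ * a, nmem π hπ a⟩
            * ⟨(ee (π b))⁻¹ * b, nmem π hπ b⟩ := by
      apply Subtype.ext
      show (ee (π (a * b)))⁻¹ * (a * b)
          = sα (π a) (π b) * ((ee (π a))⁻¹ * a) * ((ee (π b))⁻¹ * b)
      rw [map_mul]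
      exact mulkey π hπ a b
    rw [hk, map_mul χ, map_mul χ, map_mul π, hf (π a) (π b)]
    apply Units.ext
    simp only [Units.val_mul, Units.val_inv_eq_inv_val]
    field_simp
  · intro k hk
    simp only [MonoidHom.coe_mk, OneHom.coe_mk]
    have hπk : π k = 1 := MonoidHom.mem_ker.mp hk
    have h2 : (⟨(ee (π k))⁻¹ * k, nmem π hπ k⟩ : π.ker)
        = (⟨ee (1:G), mem1⟩)⁻¹ * ⟨k, hk⟩ := by
      apply Subtype.ext
      show (ee (π k))⁻¹ * k = (ee (1:G))⁻¹ * k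
      rw [hπk]
    rw [h2, map_mul, map_inv, hf1, hπk, ← mul_assoc, mul_inv_cancel, one_mul]
end


open Complex in
private noncomputable def ratexp : ℚ →+ Additive ℂˣ where
  toFun q := Additive.ofMul (Units.mk0 (Complex.exp (2 * Real.pi * q * Complex.I))
    (Complex.exp_ne_zero _))
  map_zero' := by
    rw [ofMul_eq_zero]
    apply Units.ext
    simp
  map_add' q r := by
    rw [← ofMul_mul]
    show Additive.ofMul _ = Additive.ofMul _
    apply congrArg
    apply Units.ext
    show Complex.exp _ = Complex.exp _ * Complex.exp _
    rw [← Complex.exp_add]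
    congr 1
    push_cast
    ring

private lemma ratexp_int (n : ℤ) : ratexp ((n : ℚ)) = 0 := by
  have h : (Units.mk0 (Complex.exp (2 * Real.pi * (((n : ℚ)) : ℂ) * Complex.I))
      (Complex.exp_ne_zero _) : ℂˣ) = 1 := by
    apply Units.ext
    show Complex.exp _ = 1
    rw [Complex.exp_eq_one_iff]
    exact ⟨n, by push_cast; ring⟩
  exact congrArg Additive.ofMul h

private noncomputable def circChar : AddCircle (1 : ℚ) →+ Additive ℂˣ :=
  QuotientAddGroup.lift (AddSubgroup.zmultiples (1 : ℚ)) ratexp (by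
    intro x hx
    obtain ⟨n, rfl⟩ := AddSubgroup.mem_zmultiples_iff.mp hx
    rw [AddMonoidHom.mem_ker]
    rw [show (n : ℤ) • (1:ℚ) = ((n:ℚ)) by simp]
    exact ratexp_int n)

private lemma circChar_ne {x : AddCircle (1 : ℚ)} (hx : x ≠ 0) : circChar x ≠ 0 := by
  induction x using QuotientAddGroup.induction_on with
  | H q =>
    intro h
    apply hx
    have h1 : (Units.mk0 (Complex.exp (2 * Real.pi * q * Complex.I))
        (Complex.exp_ne_zero _) : ℂˣ) = 1 := h
    have h2 : Complex.exp (2 * Real.pi * q * Complex.I) = 1 := congrArg Units.val h1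
    rw [Complex.exp_eq_one_iff] at h2
    obtain ⟨n, hn⟩ := h2
    have h3 : (q : ℂ) = (n : ℂ) := by
      have hne : ((2 : ℂ) * Real.pi * Complex.I : ℂ) ≠ 0 := by
        simp [Real.pi_ne_zero, Complex.I_ne_zero]
      have hn' : (q : ℂ) * (2 * Real.pi * Complex.I)
          = (n : ℂ) * (2 * Real.pi * Complex.I) := by linear_combination hn
      exact mul_right_cancel₀ hne hn'
    have h4 : q = (n : ℚ) := by
      exact_mod_cast h3
    rw [h4]
    rw [QuotientAddGroup.eq_zero_iff]
    exact AddSubgroup.mem_zmultiples_iff.mpr ⟨n, by simp⟩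

private lemma exists_char {K : Type*} [CommGroup K] {x : K} (hx : x ≠ 1) :
    ∃ χ : K →* ℂˣ, χ x ≠ 1 := by
  have hx' : Additive.ofMul x ≠ 0 := by simpa using hx
  obtain ⟨c, hc⟩ := CharacterModule.exists_character_apply_ne_zero_of_ne_zero
    (A := Additive K) hx'
  refine ⟨AddMonoidHom.toMultiplicativeLeft
    (circChar.comp (show Additive K →+ AddCircle (1:ℚ) from c)), ?_⟩
  have : circChar (c (Additive.ofMul x)) ≠ 0 := circChar_ne hc
  exact this



/-- For a finite perfect group `G` such that every symmetric 2-cocycle on `G`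
with values in `ℂˣ` is a coboundary, the homomorphism `π × Ab : A(G) → G × A(G)^{ab}` is a
group isomorphism. -/
theorem stmt18 {G : Type*} [Group G] [Finite G]
    (hperf : commutator G = ⊤)
    (hsymm : ∀ α : G → G → ℂˣ,
      (∀ g h k : G, α g h * α (g * h) k = α h k * α g (h * k)) →
      (∀ g h : G, α g h = α h g) →
      ∃ f : G → ℂˣ, ∀ g h : G, α g h = f g * f h * (f (g * h))⁻¹)
    (π : Rack.EnvelGroup (Quandle.Conj G) →* G)
    (hπ : ∀ g : G, π (Rack.toEnvelGroup (Quandle.Conj G) g) = g) :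
    Function.Bijective
      (fun a : Rack.EnvelGroup (Quandle.Conj G) => (π a, Abelianization.of a)) := by
  constructor
  · intro a b hab
    simp only [Prod.mk.injEq] at hab
    obtain ⟨h1, h2⟩ := hab
    by_contra hne
    have hn : b⁻¹ * a ≠ 1 := fun h => hne (inv_mul_eq_one.mp h).symm
    have hmem : b⁻¹ * a ∈ π.ker := by
      rw [MonoidHom.mem_ker, map_mul, map_inv, h1, inv_mul_cancel]
    letI : CommGroup ↥π.ker :=
      { (inferInstance : Group ↥π.ker) with
        mul_comm := fun u v => Subtype.ext (ee_central π hπ u.2 v.1) }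
    have hx1 : (⟨b⁻¹ * a, hmem⟩ : π.ker) ≠ 1 := by
      intro h
      exact hn (congrArg Subtype.val h)
    obtain ⟨χ, hχ⟩ := exists_char hx1
    obtain ⟨Φ, hΦ⟩ := ext_char π hπ hsymm χ
    have hab1 : Abelianization.of (b⁻¹ * a) = 1 := by
      rw [map_mul, map_inv, h2, inv_mul_cancel]
    have hΦ1 : Φ (b⁻¹ * a) = 1 := by
      have hl := Abelianization.lift_apply_of (f := Φ) (x := b⁻¹ * a)
      rw [← hl, hab1, map_one]
    rw [hΦ _ hmem] at hΦ1
    exact hχ hΦ1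
  · rintro ⟨g, c⟩
    obtain ⟨a0, rfl⟩ : ∃ a0, Abelianization.of a0 = c := by
      obtain ⟨a0, ha0⟩ := Quot.exists_rep c
      exact ⟨a0, by rw [← ha0]; rfl⟩
    have hπsurj : Function.Surjective π := fun g =>
      ⟨Rack.toEnvelGroup (Quandle.Conj G) g, hπ g⟩
    have hmap : Subgroup.map π (commutator (Rack.EnvelGroup (Quandle.Conj G))) = ⊤ := by
      rw [commutator_def, Subgroup.map_commutator,
        Subgroup.map_top_of_surjective _ hπsurj, ← commutator_def, hperf]
    have hmem : (π a0)⁻¹ * g ∈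
        Subgroup.map π (commutator (Rack.EnvelGroup (Quandle.Conj G))) := by
      rw [hmap]; trivial
    obtain ⟨s, hs, hπs⟩ := hmem
    refine ⟨a0 * s, ?_⟩
    have hAbs : Abelianization.of s = 1 :=
      Abelianization.commutator_subset_ker
        (Abelianization.of (G := Rack.EnvelGroup (Quandle.Conj G))) hs
    show (π (a0 * s), Abelianization.of (a0 * s)) = (g, Abelianization.of a0)
    rw [map_mul, map_mul, hπs, hAbs, mul_one, mul_inv_cancel_left]
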